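/- Let n ≥ 3 and let f ∈ S = ℂ[x₁, …, xₙ] be a homogeneous polynomial of degree d ≥ 3 defining a smooth hypersurface in ℙ^{n−1} (equivalently, the partial derivatives ∂f/∂x₁, …, ∂f/∂xₙ have no common zero in ℂⁿ ∖ {0}). Let J(f) = (∂f/∂x₁, …, ∂f/∂xₙ) be the gradient ideal and M(f) = S/J(f) the Milnor algebra, an Artinian Gorenstein graded ℂ-algebra with socle degree T = n(d−2). Let A_f ∈ R = ℂ[y₁, …, yₙ] be a homogeneous polynomial of degree T with Ann(A_f) = J(f) (a Macaulay inverse system for M(f)). Then there exists a linear form ℓ ∈ S₁ such that multiplication ℓ^{T−2} : M(f)₁ → M(f)_{T−1} is a linear isomorphism if and only if the Hessian determinant det(∂²A_f/∂yᵢ∂yⱼ) is a nonzero element of R. -/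

import Mathlib

open MvPolynomial

/-- The contraction (apolarity) action of `g ∈ ℂ[x₁,…,xₙ]` on `F ∈ ℂ[y₁,…,yₙ]`,
obtained by identifying `xᵢ` with `∂/∂yᵢ`. -/
noncomputable def contract {n : ℕ} (g F : MvPolynomial (Fin n) ℂ) : MvPolynomial (Fin n) ℂ :=
  ∑ α ∈ g.support, g.coeff α •
    (List.finRange n).foldr (fun i G => (⇑(pderiv (R := ℂ) i))^[α i] G) F

namespace Apolar

variable {n : ℕ}

abbrev Pn (n : ℕ) := MvPolynomial (Fin n) ℂ

noncomputable def Dfold (l : List (Fin n)) (γ : Fin n →₀ ℕ) (F : Pn n) : Pn n :=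
  l.foldr (fun i G => (⇑(pderiv (R := ℂ) i))^[γ i] G) F

lemma contract_def (g F : Pn n) :
    contract g F = ∑ α ∈ g.support, g.coeff α • Dfold (List.finRange n) α F := rfl

@[simp] lemma Dfold_nil (γ : Fin n →₀ ℕ) (F : Pn n) : Dfold [] γ F = F := rfl

lemma Dfold_cons (i : Fin n) (l : List (Fin n)) (γ : Fin n →₀ ℕ) (F : Pn n) :
    Dfold (i :: l) γ F = (⇑(pderiv (R := ℂ) i))^[γ i] (Dfold l γ F) := rfl

lemma pderiv_comm' (i j : Fin n) (F : Pn n) :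
    pderiv i (pderiv j F) = pderiv j (pderiv i F) := by
  induction F using MvPolynomial.induction_on' with
  | add p q hp hq => simp [map_add, hp, hq]
  | monomial s a =>
    by_cases h : i = j
    · subst h; rfl
    · simp only [pderiv_monomial]
      have e0 : s - Finsupp.single j 1 - Finsupp.single i 1
            = s - Finsupp.single i 1 - Finsupp.single j 1 := by
        ext k; simp only [Finsupp.tsub_apply, Finsupp.single_apply]
        split_ifs <;> omega
      have e1 : (s - Finsupp.single j 1 : Fin n →₀ ℕ) i = s i := by
        simp [Finsupp.tsub_apply, Finsupp.single_eq_of_ne' (fun hh : j = i => h hh.symm)]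
      have e2 : (s - Finsupp.single i 1 : Fin n →₀ ℕ) j = s j := by
        simp [Finsupp.tsub_apply, Finsupp.single_eq_of_ne' h]
      rw [e0, e1, e2]
      ring_nf

lemma commute_pderiv (i j : Fin n) :
    Function.Commute (⇑(pderiv (R := ℂ) i) : Pn n → Pn n) ⇑(pderiv (R := ℂ) j) :=
  fun F => pderiv_comm' i j F

lemma iter_pderiv_add (i : Fin n) (k : ℕ) (F G : Pn n) :
    (⇑(pderiv (R := ℂ) i))^[k] (F + G)
      = (⇑(pderiv (R := ℂ) i))^[k] F + (⇑(pderiv (R := ℂ) i))^[k] G := by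
  induction k with
  | zero => rfl
  | succ k ih => simp [Function.iterate_succ_apply', ih, map_add]

lemma iter_pderiv_smul (i : Fin n) (k : ℕ) (c : ℂ) (F : Pn n) :
    (⇑(pderiv (R := ℂ) i))^[k] (c • F) = c • (⇑(pderiv (R := ℂ) i))^[k] F := by
  induction k with
  | zero => rfl
  | succ k ih => simp [Function.iterate_succ_apply', ih, map_smul]

lemma Dfold_add (l : List (Fin n)) (γ : Fin n →₀ ℕ) (F G : Pn n) :
    Dfold l γ (F + G) = Dfold l γ F + Dfold l γ G := by
  induction l with
  | nil => rfl
  | cons i t ih => simp [Dfold_cons, ih, iter_pderiv_add]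

lemma Dfold_smul (l : List (Fin n)) (γ : Fin n →₀ ℕ) (c : ℂ) (F : Pn n) :
    Dfold l γ (c • F) = c • Dfold l γ F := by
  induction l with
  | nil => rfl
  | cons i t ih => simp [Dfold_cons, ih, iter_pderiv_smul]

lemma Dfold_zero (l : List (Fin n)) (γ : Fin n →₀ ℕ) : Dfold l γ (0 : Pn n) = 0 := by
  have := Dfold_smul l γ 0 0
  simpa using this

lemma iter_Dfold_comm (j : Fin n) (k : ℕ) (l : List (Fin n)) (γ : Fin n →₀ ℕ) (F : Pn n) :
    (⇑(pderiv (R := ℂ) j))^[k] (Dfold l γ F) = Dfold l γ ((⇑(pderiv (R := ℂ) j))^[k] F) := by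
  induction l with
  | nil => rfl
  | cons i t ih =>
    simp only [Dfold_cons]
    rw [((commute_pderiv j i).iterate_left k).iterate_right (γ i) (Dfold t γ F), ih]

lemma Dfold_add_index (l : List (Fin n)) (γ δ : Fin n →₀ ℕ) (F : Pn n) :
    Dfold l (γ + δ) F = Dfold l γ (Dfold l δ F) := by
  induction l with
  | nil => rfl
  | cons i t ih =>
    simp only [Dfold_cons, Finsupp.add_apply, ih]
    rw [Function.iterate_add_apply, iter_Dfold_comm]

lemma Dfold_eq_self (l : List (Fin n)) (γ : Fin n →₀ ℕ) (F : Pn n)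
    (h : ∀ j ∈ l, γ j = 0) : Dfold l γ F = F := by
  induction l with
  | nil => rfl
  | cons i t ih =>
    rw [Dfold_cons, h i (by simp), ih fun j hj => h j (by simp [hj])]
    rfl

lemma Dfold_single (l : List (Fin n)) (hl : l.Nodup) (i : Fin n) (hi : i ∈ l) (F : Pn n) :
    Dfold l (Finsupp.single i 1) F = pderiv i F := by
  induction l with
  | nil => simp at hi
  | cons j t ih =>
    rw [List.nodup_cons] at hl
    rcases List.mem_cons.mp hi with h | h
    · subst h
      rw [Dfold_cons, Dfold_eq_self t _ F fun k hk => Finsupp.single_eq_of_ne (by rintro rfl; exact hl.1 hk)]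
      simp
    · rw [Dfold_cons, Finsupp.single_eq_of_ne (by rintro rfl; exact hl.1 h), ih hl.2 h]
      simp

lemma contract_eq_sum_subset (g F : Pn n) {s : Finset (Fin n →₀ ℕ)} (hs : g.support ⊆ s) :
    contract g F = ∑ α ∈ s, g.coeff α • Dfold (List.finRange n) α F := by
  rw [contract_def]
  exact Finset.sum_subset hs fun α _ hα => by
    rw [MvPolynomial.notMem_support_iff.mp hα, zero_smul]

lemma contract_add_left (g h F : Pn n) :
    contract (g + h) F = contract g F + contract h F := by
  classical
  rw [contract_eq_sum_subset (g + h) F (MvPolynomial.support_add),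
    contract_eq_sum_subset g F Finset.subset_union_left,
    contract_eq_sum_subset h F Finset.subset_union_right, ← Finset.sum_add_distrib]
  exact Finset.sum_congr rfl fun α _ => by rw [MvPolynomial.coeff_add, add_smul]

lemma contract_smul_left (c : ℂ) (g F : Pn n) :
    contract (c • g) F = c • contract g F := by
  rw [contract_eq_sum_subset (c • g) F (Finsupp.support_smul), contract_def, Finset.smul_sum]
  exact Finset.sum_congr rfl fun α _ => by
    rw [MvPolynomial.coeff_smul, smul_assoc]

lemma contract_zero_left (F : Pn n) : contract 0 F = 0 := by
  have := contract_smul_left 0 0 F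
  simpa using this

lemma contract_sum_left {ι : Type*} (s : Finset ι) (g : ι → Pn n) (F : Pn n) :
    contract (∑ i ∈ s, g i) F = ∑ i ∈ s, contract (g i) F := by
  classical
  induction s using Finset.induction_on with
  | empty => simp [contract_zero_left]
  | insert _ _ hx ih => rw [Finset.sum_insert hx, Finset.sum_insert hx, contract_add_left, ih]

lemma contract_monomial (α : Fin n →₀ ℕ) (c : ℂ) (F : Pn n) :
    contract (monomial α c) F = c • Dfold (List.finRange n) α F := by
  classical
  rw [contract_eq_sum_subset _ F (MvPolynomial.support_monomial_subset),
    Finset.sum_singleton, MvPolynomial.coeff_monomial, if_pos rfl]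

lemma contract_X (i : Fin n) (F : Pn n) : contract (X i) F = pderiv i F := by
  rw [show (X i : Pn n) = monomial (Finsupp.single i 1) 1 from rfl, contract_monomial,
    Dfold_single _ (List.nodup_finRange n) i (List.mem_finRange i), one_smul]

lemma contract_one (F : Pn n) : contract 1 F = F := by
  rw [show (1 : Pn n) = monomial 0 1 from rfl, contract_monomial,
    Dfold_eq_self _ _ _ fun j _ => rfl, one_smul]

lemma Dfold_sum {ι : Type*} (l : List (Fin n)) (γ : Fin n →₀ ℕ) (s : Finset ι) (F : ι → Pn n) :
    Dfold l γ (∑ i ∈ s, F i) = ∑ i ∈ s, Dfold l γ (F i) := by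
  classical
  induction s using Finset.induction_on with
  | empty => simp [Dfold_zero]
  | insert _ _ hx ih => rw [Finset.sum_insert hx, Finset.sum_insert hx, Dfold_add, ih]

lemma contract_mul (g h F : Pn n) : contract (g * h) F = contract g (contract h F) := by
  classical
  conv_lhs => rw [g.as_sum, h.as_sum]
  rw [Finset.sum_mul_sum, contract_sum_left]
  rw [contract_def g (contract h F)]
  refine Finset.sum_congr rfl fun α hα => ?_
  rw [contract_sum_left]
  rw [show contract h F = ∑ β ∈ h.support, h.coeff β • Dfold (List.finRange n) β F from rfl,
    Dfold_sum, Finset.smul_sum]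
  refine Finset.sum_congr rfl fun β hβ => ?_
  rw [MvPolynomial.monomial_mul, contract_monomial, Dfold_add_index, Dfold_smul, mul_smul]

lemma degree_fin (γ : Fin n →₀ ℕ) : γ.degree = ∑ j, γ j := by
  rw [Finsupp.degree]
  exact Finset.sum_subset (Finset.subset_univ _) fun j _ hj =>
    Finsupp.notMem_support_iff.mp hj

lemma isHomog_pderiv {m : ℕ} {F : Pn n} (h : F.IsHomogeneous (m + 1)) (i : Fin n) :
    (pderiv i F).IsHomogeneous m := by
  classical
  rw [F.as_sum, map_sum]
  refine MvPolynomial.IsHomogeneous.sum _ _ _ fun α hα => ?_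
  rw [pderiv_monomial]
  by_cases h0 : α i = 0
  · rw [h0]; simp [MvPolynomial.isHomogeneous_zero]
  · refine MvPolynomial.isHomogeneous_monomial _ ?_
    have hdeg : α.degree = m + 1 := by
      have := h (MvPolynomial.mem_support_iff.mp hα)
      rw [Finsupp.degree_eq_weight_one]; exact this
    rw [degree_fin] at hdeg ⊢
    have hsplit : ∀ γ : Fin n →₀ ℕ, ∑ j, γ j = γ i + ∑ j ∈ Finset.univ.erase i, γ j :=
      fun γ => (Finset.add_sum_erase _ _ (Finset.mem_univ i)).symm
    rw [hsplit] at hdeg ⊢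
    have he : ∑ j ∈ Finset.univ.erase i, (α - Finsupp.single i 1 : Fin n →₀ ℕ) j
        = ∑ j ∈ Finset.univ.erase i, α j := by
      refine Finset.sum_congr rfl fun j hj => ?_
      rw [Finsupp.tsub_apply, Finsupp.single_eq_of_ne' (Finset.ne_of_mem_erase hj).symm]
      omega
    have hi : (α - Finsupp.single i 1 : Fin n →₀ ℕ) i = α i - 1 := by
      rw [Finsupp.tsub_apply, Finsupp.single_eq_same]
    rw [he, hi]
    omega

lemma isHomog_iter_pderiv {N k : ℕ} {F : Pn n} (h : F.IsHomogeneous (N + k)) (i : Fin n) :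
    ((⇑(pderiv (R := ℂ) i))^[k] F).IsHomogeneous N := by
  induction k generalizing N with
  | zero => simpa using h
  | succ k ih =>
    rw [Function.iterate_succ_apply']
    have : F.IsHomogeneous ((N + 1) + k) := by rwa [show (N+1)+k = N+(k+1) by omega]
    exact isHomog_pderiv (ih (N := N + 1) this) i

lemma isHomog_Dfold {N : ℕ} (l : List (Fin n)) (γ : Fin n →₀ ℕ) {F : Pn n}
    (h : F.IsHomogeneous (N + (l.map γ).sum)) : (Dfold l γ F).IsHomogeneous N := by
  induction l generalizing N with
  | nil => simpa using h
  | cons i t ih =>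
    rw [Dfold_cons]
    refine isHomog_iter_pderiv (ih (N := N + γ i) ?_) i
    rwa [show N + γ i + (t.map γ).sum = N + ((i :: t).map γ).sum by simp; omega]

lemma isHomog_contract {N k : ℕ} {g F : Pn n} (hg : g.IsHomogeneous k)
    (hF : F.IsHomogeneous (N + k)) : (contract g F).IsHomogeneous N := by
  rw [contract_def, ← mem_homogeneousSubmodule]
  refine Submodule.sum_mem _ fun α hα => Submodule.smul_mem _ _ ?_
  rw [mem_homogeneousSubmodule]
  refine isHomog_Dfold _ _ ?_
  have h1 : α.degree = k := by
    have := hg (MvPolynomial.mem_support_iff.mp hα)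
    rw [Finsupp.degree_eq_weight_one]; exact this
  rwa [show N + ((List.finRange n).map ⇑α).sum = N + k by
    rw [← Fin.sum_univ_def, ← degree_fin, h1]]

lemma degree_one_eq_single {m : Fin n →₀ ℕ} (h : m.degree = 1) :
    ∃ i, m = Finsupp.single i 1 := by
  rw [degree_fin] at h
  have hex : ∃ i, m i ≠ 0 := by
    by_contra hc
    push_neg at hc
    simp [hc] at h
  obtain ⟨i, hi⟩ := hex
  have hsplit : ∑ j, m j = m i + ∑ j ∈ Finset.univ.erase i, m j :=
    (Finset.add_sum_erase _ _ (Finset.mem_univ i)).symm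
  rw [hsplit] at h
  have hmi : m i = 1 := by omega
  have hrest : ∑ j ∈ Finset.univ.erase i, m j = 0 := by omega
  refine ⟨i, ?_⟩
  ext k
  rcases eq_or_ne k i with rfl | hk
  · simp [hmi]
  · rw [Finsupp.single_eq_of_ne' (Ne.symm hk)]
    exact (Finset.sum_eq_zero_iff.mp hrest k (Finset.mem_erase.mpr ⟨hk, Finset.mem_univ k⟩))

lemma rep1 {G : Pn n} (h : G.IsHomogeneous 1) :
    G = ∑ i, MvPolynomial.coeff (Finsupp.single i 1) G • X i := by
  classical
  apply MvPolynomial.ext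
  intro m
  rw [MvPolynomial.coeff_sum]
  simp only [MvPolynomial.coeff_smul, MvPolynomial.coeff_X', smul_eq_mul]
  by_cases hm : m.degree = 1
  · obtain ⟨i0, rfl⟩ := degree_one_eq_single hm
    rw [Finset.sum_eq_single i0]
    · rw [if_pos rfl, mul_one]
    · intro j _ hj
      rw [if_neg (by
        intro hc
        exact hj ((Finsupp.single_left_inj one_ne_zero).mp hc)), mul_zero]
    · intro hc; exact absurd (Finset.mem_univ i0) hc
  · rw [h.coeff_eq_zero hm, Finset.sum_eq_zero]
    intro j _
    rw [if_neg, mul_zero]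
    intro hc
    apply hm
    rw [← hc, degree_fin]
    simp [Finsupp.single_apply]
  
lemma pderiv_rep {G : Pn n} (h : G.IsHomogeneous 1) (j : Fin n) :
    pderiv j G = C (MvPolynomial.coeff (Finsupp.single j 1) G) := by
  conv_lhs => rw [rep1 h]
  rw [map_sum, Finset.sum_eq_single j]
  · rw [Derivation.map_smul, pderiv_X_self, smul_eq_C_mul, mul_one]
  · intro i _ hij
    rw [Derivation.map_smul, pderiv_X_of_ne hij, smul_zero]
  · intro hc; exact absurd (Finset.mem_univ j) hc

lemma eq_zero_of_homog1_pderiv {G : Pn n} (h : G.IsHomogeneous 1)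
    (h' : ∀ i, pderiv i G = 0) : G = 0 := by
  have hz : ∀ i, MvPolynomial.coeff (Finsupp.single i 1) G = 0 := by
    intro i
    have := (pderiv_rep h i).symm.trans (h' i)
    exact (MvPolynomial.C_injective (Fin n) ℂ) (by simpa using this)
  rw [rep1 h]
  simp [hz]

lemma eq_C_of_homog0 {G : Pn n} (h : G.IsHomogeneous 0) :
    G = C (MvPolynomial.coeff 0 G) := by
  apply MvPolynomial.ext
  intro m
  rcases eq_or_ne m 0 with rfl | hm
  · simp
  · rw [h.coeff_eq_zero (by rwa [Ne, Finsupp.degree_eq_zero_iff]), MvPolynomial.coeff_C,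
      if_neg (Ne.symm hm)]

lemma euler_monomial (a : Fin n → ℂ) (α : Fin n →₀ ℕ) (c : ℂ) :
    ∑ i, a i * eval a (pderiv i (monomial α c))
      = (α.degree : ℂ) * eval a (monomial α c) := by
  classical
  have hval : ∀ e : Fin n →₀ ℕ, ∀ r : ℂ, eval a (monomial e r) = r * ∏ j, a j ^ e j := by
    intro e r
    rw [MvPolynomial.eval_monomial]
    congr 1
    exact Finsupp.prod_fintype _ _ fun j => pow_zero _
  have key : ∀ i, a i * eval a (pderiv i (monomial α c))
      = c * (α i : ℂ) * ∏ j, a j ^ α j := by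
    intro i
    rw [pderiv_monomial, hval]
    rcases Nat.eq_zero_or_pos (α i) with h0 | hpos
    · simp [h0]
    · have hprod : ∏ j, a j ^ (α - Finsupp.single i 1 : Fin n →₀ ℕ) j
          = a i ^ (α i - 1) * ∏ j ∈ Finset.univ.erase i, a j ^ α j := by
        rw [← Finset.mul_prod_erase Finset.univ _ (Finset.mem_univ i)]
        congr 1
        · rw [Finsupp.tsub_apply, Finsupp.single_eq_same]
        · refine Finset.prod_congr rfl fun j hj => ?_
          rw [Finsupp.tsub_apply, Finsupp.single_eq_of_ne' (Finset.ne_of_mem_erase hj).symm,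
            Nat.sub_zero]
      have hfull : ∏ j, a j ^ α j = a i ^ α i * ∏ j ∈ Finset.univ.erase i, a j ^ α j :=
        (Finset.mul_prod_erase Finset.univ _ (Finset.mem_univ i)).symm
      rw [hprod, hfull]
      have hpow : a i * a i ^ (α i - 1) = a i ^ α i := by
        conv_rhs => rw [show α i = (α i - 1) + 1 by omega]
        rw [pow_succ]
        ring
      push_cast
      calc a i * (c * (α i : ℂ) * (a i ^ (α i - 1) * ∏ j ∈ Finset.univ.erase i, a j ^ α j))
          = c * (α i : ℂ) * ((a i * a i ^ (α i - 1)) * ∏ j ∈ Finset.univ.erase i, a j ^ α j) := by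
            ring
        _ = c * (α i : ℂ) * (a i ^ α i * ∏ j ∈ Finset.univ.erase i, a j ^ α j) := by rw [hpow]
  rw [Finset.sum_congr rfl fun i _ => key i, hval, ← Finset.sum_mul, degree_fin]
  push_cast
  rw [← Finset.mul_sum]
  ring

lemma euler (a : Fin n → ℂ) {m : ℕ} {G : Pn n} (h : G.IsHomogeneous m) :
    ∑ i, a i * eval a (pderiv i G) = (m : ℂ) * eval a G := by
  classical
  conv_lhs => rw [G.as_sum]
  conv_rhs => rw [G.as_sum]
  simp only [map_sum, Finset.mul_sum]
  rw [Finset.sum_comm]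
  refine Finset.sum_congr rfl fun α hα => ?_
  have hdeg : α.degree = m := by
    have := h (MvPolynomial.mem_support_iff.mp hα)
    rw [Finsupp.degree_eq_weight_one]; exact this
  rw [← hdeg]
  exact euler_monomial a α _

noncomputable def lf (a : Fin n → ℂ) : Pn n := ∑ i, a i • X i

lemma lf_isHomog (a : Fin n → ℂ) : (lf a).IsHomogeneous 1 := by
  rw [← mem_homogeneousSubmodule]
  exact Submodule.sum_mem _ fun i _ => Submodule.smul_mem _ _
    ((mem_homogeneousSubmodule _ _).mpr (isHomogeneous_X _ i))

lemma contract_lf (a : Fin n → ℂ) (G : Pn n) :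
    contract (lf a) G = ∑ i, a i • pderiv i G := by
  rw [lf, contract_sum_left]
  exact Finset.sum_congr rfl fun i _ => by rw [contract_smul_left, contract_X]

lemma contract_pow_lf (a : Fin n → ℂ) : ∀ {m : ℕ} {G : Pn n}, G.IsHomogeneous m →
    contract ((lf a) ^ m) G = C ((m.factorial : ℂ) * eval a G) := by
  intro m
  induction m with
  | zero =>
    intro G hG
    rw [pow_zero, contract_one]
    conv_lhs => rw [eq_C_of_homog0 hG]
    rw [eq_C_of_homog0 hG]
    simp
  | succ m ih =>
    intro G hG
    rw [pow_succ, contract_mul]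
    have hG' : (contract (lf a) G).IsHomogeneous m :=
      isHomog_contract (lf_isHomog a) (by rwa [show m + 1 = m + 1 from rfl])
    rw [ih hG']
    congr 1
    have he : eval a (contract (lf a) G) = ((m : ℂ) + 1) * eval a G := by
      rw [contract_lf, map_sum]
      have : ∀ i : Fin n, eval a (a i • pderiv i G) = a i * eval a (pderiv i G) := by
        intro i
        rw [smul_eq_C_mul, map_mul, eval_C]
      rw [Finset.sum_congr rfl fun i _ => this i, euler a hG]
      push_cast
      ring
    rw [he, Nat.factorial_succ]
    push_cast
    ring

lemma pairing (a : Fin n → ℂ) {T' : ℕ} {A : Pn n} (hA : A.IsHomogeneous (T' + 2)) (i j : Fin n) :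
    contract ((lf a) ^ T' * (X i * X j)) A
      = C ((T'.factorial : ℂ) * eval a (pderiv i (pderiv j A))) := by
  rw [contract_mul, contract_mul, contract_X, contract_X]
  have h1 : (pderiv j A).IsHomogeneous (T' + 1) :=
    isHomog_pderiv (by rwa [show T' + 1 + 1 = T' + 2 by omega]) j
  exact contract_pow_lf a (isHomog_pderiv h1 i)

lemma pairing_vec (a : Fin n → ℂ) {T' : ℕ} {A : Pn n} (hA : A.IsHomogeneous (T' + 2))
    (c : Fin n → ℂ) (i : Fin n) :
    contract ((lf a) ^ T' * (X i * lf c)) A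
      = C ((T'.factorial : ℂ) *
        Matrix.mulVec (Matrix.of fun i j => eval a (pderiv i (pderiv j A))) c i) := by
  classical
  have hXl : X i * lf c = ∑ j, c j • (X i * X j) := by
    rw [lf, Finset.mul_sum]
    exact Finset.sum_congr rfl fun j _ => (mul_smul_comm _ _ _)
  have hmv : Matrix.mulVec (Matrix.of fun i j => eval a (pderiv i (pderiv j A))) c i
      = ∑ j, eval a (pderiv i (pderiv j A)) * c j := by
    simp [Matrix.mulVec, dotProduct]
  rw [hXl, Finset.mul_sum, contract_sum_left, hmv, Finset.mul_sum, map_sum]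
  refine Finset.sum_congr rfl fun j _ => ?_
  rw [mul_smul_comm, contract_smul_left, pairing a hA i j, smul_eq_C_mul, ← map_mul]
  congr 1
  ring

lemma mem_J_iff {J : Ideal (Pn n)} {A : Pn n} {T : ℕ} (hA : A.IsHomogeneous T) (hT : 1 ≤ T)
    (hann : ∀ g : Pn n, contract g A = 0 ↔ g ∈ J) {w : Pn n} (hw : w.IsHomogeneous (T - 1)) :
    w ∈ J ↔ ∀ i, contract (X i * w) A = 0 := by
  constructor
  · intro hw' i
    rw [contract_mul, (hann w).mpr hw', contract_X, map_zero]
  · intro h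
    rw [← hann]
    have hG : (contract w A).IsHomogeneous 1 :=
      isHomog_contract hw (by rwa [show 1 + (T - 1) = T by omega])
    apply eq_zero_of_homog1_pderiv hG
    intro i
    rw [← contract_X i, ← contract_mul]
    exact h i

lemma homog_one_mem_span {f : Pn n} {d : ℕ} (hd : 3 ≤ d) (hf : f.IsHomogeneous d) {u : Pn n}
    (hu : u.IsHomogeneous 1)
    (humem : u ∈ Ideal.span (Set.range fun i => pderiv (R := ℂ) i f)) : u = 0 := by
  classical
  obtain ⟨g, hg⟩ := Ideal.mem_span_range_iff_exists_fun.mp humem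
  apply MvPolynomial.ext; intro m
  rw [MvPolynomial.coeff_zero]
  by_cases hm : m.degree = 1
  swap
  · exact hu.coeff_eq_zero hm
  · rw [← hg, MvPolynomial.coeff_sum]
    refine Finset.sum_eq_zero fun i _ => ?_
    rw [MvPolynomial.coeff_mul]
    refine Finset.sum_eq_zero fun p hp => ?_
    have hpf : (pderiv i f).IsHomogeneous (d - 1) :=
      isHomog_pderiv (by rwa [show (d - 1) + 1 = d by omega]) i
    have hsum := Finset.HasAntidiagonal.mem_antidiagonal.mp hp
    have h2 : p.2.degree ≤ 1 := by
      rw [← hm, degree_fin, degree_fin]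
      refine Finset.sum_le_sum fun j _ => ?_
      have : p.1 j + p.2 j = m j := by rw [← hsum]; simp
      omega
    rw [hpf.coeff_eq_zero (by omega), mul_zero]

lemma contract_sub_left (g h F : Pn n) :
    contract (g - h) F = contract g F - contract h F := by
  have e : g - h = g + (-1 : ℂ) • h := by rw [neg_one_smul, sub_eq_add_neg]
  rw [e, contract_add_left, contract_smul_left, neg_one_smul, ← sub_eq_add_neg]

lemma pderiv_lf (c : Fin n → ℂ) (j : Fin n) : pderiv j (lf c) = C (c j) := by
  rw [lf, map_sum, Finset.sum_eq_single j]
  · rw [Derivation.map_smul, pderiv_X_self, smul_eq_C_mul, mul_one]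
  · intro i _ hij
    rw [Derivation.map_smul, pderiv_X_of_ne hij, smul_zero]
  · intro hc; exact absurd (Finset.mem_univ j) hc

end Apolar

open Apolar in
theorem stmt1 (n : ℕ) (hn : 3 ≤ n)
    (f : MvPolynomial (Fin n) ℂ) (d : ℕ) (hd : 3 ≤ d) (hfhom : f.IsHomogeneous d)
    (hsmooth : ∀ a : Fin n → ℂ, (∀ i, eval a (pderiv i f) = 0) → a = 0)
    (J : Ideal (MvPolynomial (Fin n) ℂ))
    (hJ : J = Ideal.span (Set.range fun i => pderiv i f))
    (T : ℕ) (hT : T = n * (d - 2))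
    (A : MvPolynomial (Fin n) ℂ) (hA : A.IsHomogeneous T)
    (hann : ∀ g : MvPolynomial (Fin n) ℂ, contract g A = 0 ↔ g ∈ J)
    (M : ℕ → Submodule ℂ (MvPolynomial (Fin n) ℂ ⧸ J))
    (hM : ∀ k, M k = (homogeneousSubmodule (Fin n) ℂ k).map
      (Ideal.Quotient.mkₐ ℂ J).toLinearMap) :
    (∃ ℓ ∈ homogeneousSubmodule (Fin n) ℂ 1,
      (∀ x ∈ M 1, Ideal.Quotient.mk J (ℓ ^ (T - 2)) * x = 0 → x = 0) ∧
      (∀ y ∈ M (T - 1), ∃ x ∈ M 1, Ideal.Quotient.mk J (ℓ ^ (T - 2)) * x = y)) ↔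
    Matrix.det (Matrix.of fun i j => pderiv i (pderiv j A)) ≠ 0 := by
  classical
  have hT3 : 3 ≤ T := by
    have h1 : 1 ≤ d - 2 := by omega
    calc 3 ≤ n * 1 := by omega
      _ ≤ n * (d - 2) := Nat.mul_le_mul_left n h1
      _ = T := hT.symm
  have hA' : A.IsHomogeneous ((T - 2) + 2) := by rwa [show (T - 2) + 2 = T by omega]
  have hdet_eval : ∀ a : Fin n → ℂ,
      eval a (Matrix.det (Matrix.of fun i j => pderiv i (pderiv j A)))
        = (Matrix.of fun i j => eval a (pderiv i (pderiv j A)) :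
            Matrix (Fin n) (Fin n) ℂ).det := by
    intro a
    rw [RingHom.map_det]
    congr 1
  have hfac : (((T - 2).factorial : ℂ)) ≠ 0 := Nat.cast_ne_zero.mpr (Nat.factorial_ne_zero _)
  have hmem : ∀ w : MvPolynomial (Fin n) ℂ, w.IsHomogeneous (T - 1) →
      (w ∈ J ↔ ∀ i, contract (X i * w) A = 0) :=
    fun w hw => mem_J_iff hA (by omega) hann hw
  have hpowh : ∀ a : Fin n → ℂ, ((lf a) ^ (T - 2)).IsHomogeneous (T - 2) := by
    intro a
    have := (lf_isHomog a).pow (T - 2)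
    rwa [one_mul] at this
  have hprodh : ∀ (a : Fin n → ℂ) (u : MvPolynomial (Fin n) ℂ), u.IsHomogeneous 1 →
      ((lf a) ^ (T - 2) * u).IsHomogeneous (T - 1) := by
    intro a u hu
    have := (hpowh a).mul hu
    rwa [show (T - 2) + 1 = T - 1 by omega] at this
  constructor
  · rintro ⟨ℓ, hℓmem, hinj, _⟩
    have hℓ : ℓ.IsHomogeneous 1 := (mem_homogeneousSubmodule _ _).mp hℓmem
    set a : Fin n → ℂ := fun i => MvPolynomial.coeff (Finsupp.single i 1) ℓ with ha
    have hrep : ℓ = lf a := by rw [lf]; exact rep1 hℓ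
    have hdet : (Matrix.of fun i j => eval a (pderiv i (pderiv j A)) :
        Matrix (Fin n) (Fin n) ℂ).det ≠ 0 := by
      by_contra hdet0

      obtain ⟨c, hc0, hcv⟩ := (Matrix.exists_mulVec_eq_zero_iff).mpr hdet0
      have huh : (lf c).IsHomogeneous 1 := lf_isHomog c
      have hxmem : Ideal.Quotient.mk J (lf c) ∈ M 1 := by
        rw [hM 1]
        exact ⟨lf c, (mem_homogeneousSubmodule _ _).mpr huh, rfl⟩
      have hmemJ : ℓ ^ (T - 2) * (lf c) ∈ J := by
        rw [hrep, hmem _ (hprodh a _ huh)]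
        intro i
        rw [show X i * ((lf a) ^ (T - 2) * lf c) = (lf a) ^ (T - 2) * (X i * lf c) by ring,
          pairing_vec a hA' c i, hcv]
        simp
      have hx0 := hinj _ hxmem (by
        rw [← map_mul]
        rwa [Ideal.Quotient.eq_zero_iff_mem])
      have huJ : lf c ∈ J := by rwa [← Ideal.Quotient.eq_zero_iff_mem]
      have hu0 : lf c = 0 := homog_one_mem_span hd hfhom huh (by rwa [← hJ])
      apply hc0
      funext j
      have hpz := congrArg (⇑(pderiv (R := ℂ) j)) hu0
      rw [pderiv_lf, map_zero] at hpz
      exact (MvPolynomial.C_eq_zero).mp hpz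
    intro h0
    exact hdet (by rw [← hdet_eval a, h0, map_zero])
  · intro hdet
    have hex : ∃ a : Fin n → ℂ,
        eval a (Matrix.det (Matrix.of fun i j => pderiv i (pderiv j A))) ≠ 0 := by
      by_contra hc
      push_neg at hc
      exact hdet (MvPolynomial.funext fun x => by rw [hc x, map_zero])
    obtain ⟨a, hdeta⟩ := hex
    have hdetH : (Matrix.of fun i j => eval a (pderiv i (pderiv j A)) :
        Matrix (Fin n) (Fin n) ℂ).det ≠ 0 := by rwa [hdet_eval a] at hdeta
    have hunit : IsUnit (Matrix.of fun i j => eval a (pderiv i (pderiv j A)) :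
        Matrix (Fin n) (Fin n) ℂ).det := isUnit_iff_ne_zero.mpr hdetH
    refine ⟨lf a, (mem_homogeneousSubmodule _ _).mpr (lf_isHomog a), ?_, ?_⟩
    · intro x hx hzero
      rw [hM 1] at hx
      obtain ⟨u, humem, hux⟩ := hx
      have huh : u.IsHomogeneous 1 := (mem_homogeneousSubmodule _ _).mp humem
      set c : Fin n → ℂ := fun j => MvPolynomial.coeff (Finsupp.single j 1) u with hcdef
      have hurep : u = lf c := by rw [lf]; exact rep1 huh
      have hux' : x = Ideal.Quotient.mk J u := by rw [← hux]; rfl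
      have hmemJ : (lf a) ^ (T - 2) * u ∈ J := by
        rw [← Ideal.Quotient.eq_zero_iff_mem, map_mul, ← hux']
        exact hzero
      have hall := (hmem _ (hprodh a u huh)).mp hmemJ
      have hvec : (Matrix.of fun i j => eval a (pderiv i (pderiv j A)) :
          Matrix (Fin n) (Fin n) ℂ).mulVec c = 0 := by
        funext i
        have h2 := hall i
        rw [hurep] at h2
        rw [show X i * ((lf a) ^ (T - 2) * lf c) = (lf a) ^ (T - 2) * (X i * lf c) by ring,
          pairing_vec a hA' c i] at h2
        have h3 := (MvPolynomial.C_eq_zero).mp h2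
        rcases mul_eq_zero.mp h3 with h | h
        · exact absurd h hfac
        · exact h
      have hc0 : c = 0 := by
        have h4 := congrArg (fun v => Matrix.mulVec
          (Matrix.of fun i j => eval a (pderiv i (pderiv j A)) :
            Matrix (Fin n) (Fin n) ℂ)⁻¹ v) hvec
        simpa [Matrix.mulVec_mulVec, Matrix.nonsing_inv_mul _ hunit, Matrix.one_mulVec,
          Matrix.mulVec_zero] using h4
      rw [hux', hurep, hc0]
      simp [lf]
    · intro y hy
      rw [hM] at hy
      obtain ⟨v, hvmem, hvy⟩ := hy
      have hvh : v.IsHomogeneous (T - 1) := (mem_homogeneousSubmodule _ _).mp hvmem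
      set μ : Fin n → ℂ := fun i => MvPolynomial.coeff 0 (contract (X i * v) A) with hμdef
      have hμeq : ∀ i, contract (X i * v) A = C (μ i) := by
        intro i
        refine eq_C_of_homog0 ?_
        have hg : (X i * v).IsHomogeneous T := by
          have := (isHomogeneous_X ℂ i).mul hvh
          rwa [show 1 + (T - 1) = T by omega] at this
        exact isHomog_contract hg (by rwa [zero_add])
      set c : Fin n → ℂ := Matrix.mulVec
        (Matrix.of fun i j => eval a (pderiv i (pderiv j A)) :
          Matrix (Fin n) (Fin n) ℂ)⁻¹ ((((T - 2).factorial : ℂ))⁻¹ • μ) with hcdef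
      have huh : (lf c).IsHomogeneous 1 := lf_isHomog c
      refine ⟨Ideal.Quotient.mk J (lf c), ?_, ?_⟩
      · rw [hM 1]
        exact ⟨lf c, (mem_homogeneousSubmodule _ _).mpr huh, rfl⟩
      · have hvy' : y = Ideal.Quotient.mk J v := by rw [← hvy]; rfl
        rw [hvy', ← map_mul, Ideal.Quotient.mk_eq_mk_iff_sub_mem]
        have hwh : ((lf a) ^ (T - 2) * lf c - v).IsHomogeneous (T - 1) :=
          (hprodh a _ huh).sub hvh
        rw [hmem _ hwh]
        intro i
        rw [show X i * ((lf a) ^ (T - 2) * lf c - v)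
            = (lf a) ^ (T - 2) * (X i * lf c) - X i * v by ring,
          contract_sub_left, pairing_vec a hA' c i, hμeq i]
        have hmv : Matrix.mulVec (Matrix.of fun i j => eval a (pderiv i (pderiv j A)) :
            Matrix (Fin n) (Fin n) ℂ) c = (((T - 2).factorial : ℂ))⁻¹ • μ := by
          rw [hcdef, Matrix.mulVec_mulVec, Matrix.mul_nonsing_inv _ hunit, Matrix.one_mulVec]
        rw [hmv, sub_eq_zero]
        congr 1
        rw [Pi.smul_apply, smul_eq_mul]
        field_simp
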